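/- Let Ω : ℕ → ℚ be a sequence and define c : ℕ → ℚ by the expansion exp( − Σ_{m≥1} (1/m)·(Σ_{d ∣ m} d·Ω(d))·X^m ) = 1 − Σ_{n≥1} c(n)·X^n in ℚ⟦X⟧. Then for every n ≥ 1, n·Ω(n) = n·c(n) + Σ_{k=1}^{n−1} (Σ_{g ∣ k} g·Ω(g))·c(n−k) − Σ_{g ∣ n, g ≠ n} g·Ω(g). (Theorem 3.3, formula (3.12): the recursion expressing the exponents Ω(n) of the product form ∏(1−z^N)^{Ω(N)} of the Feynman identity in terms of the coefficients c₊(n).) -/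

import Mathlib

open Finset PowerSeries

/-- The formal exponential `exp(f) = Σ_{k≥0} f^k/k!` of a power series `f` with zero
constant term. -/
noncomputable def formalExp (f : PowerSeries ℚ) : PowerSeries ℚ :=
  PowerSeries.mk fun n =>
    ∑ k ∈ Finset.range (n + 1), PowerSeries.coeff n (f ^ k) / (Nat.factorial k : ℚ)

private lemma coeff_pow_eq_zero' {g : PowerSeries ℚ} (hg : constantCoeff g = 0)
    {n k : ℕ} (h : n < k) : PowerSeries.coeff n (g ^ k) = 0 :=
  PowerSeries.X_pow_dvd_iff.mp (pow_dvd_pow_of_dvd (PowerSeries.X_dvd_iff.mpr hg) k) n h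

private lemma coeff_formalExp_zero (g : PowerSeries ℚ) :
    PowerSeries.coeff 0 (formalExp g) = 1 := by
  simp [formalExp]

/-- The key differential-equation identity at the level of coefficients:
`(n+1)·E_{n+1} = Σ_{j=0}^{n} ((j+1)·g_{j+1})·E_{n-j}` where `E = formalExp g`. -/
private lemma key (g : PowerSeries ℚ) (hg : constantCoeff g = 0) (n : ℕ) :
    ((n : ℚ) + 1) * PowerSeries.coeff (n + 1) (formalExp g) =
      ∑ j ∈ Finset.range (n + 1),
        (PowerSeries.coeff (j + 1) g * ((j : ℚ) + 1)) *
          PowerSeries.coeff (n - j) (formalExp g) := by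
  have hterm : ∀ k : ℕ, ((n : ℚ) + 1) * PowerSeries.coeff (n + 1) (g ^ (k + 1)) =
      ((k : ℚ) + 1) * ∑ j ∈ Finset.range (n + 1),
        (PowerSeries.coeff (j + 1) g * ((j : ℚ) + 1)) *
          PowerSeries.coeff (n - j) (g ^ k) := by
    intro k
    have hD : d⁄dX ℚ (g ^ (k + 1)) = (k + 1) • (g ^ k • d⁄dX ℚ g) := by
      simpa using Derivation.leibniz_pow (d⁄dX ℚ) g (k + 1)
    have h1 := congrArg (PowerSeries.coeff n) hD
    rw [PowerSeries.coeff_derivative, map_nsmul] at h1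
    have h2 : PowerSeries.coeff n (g ^ k • d⁄dX ℚ g) =
        ∑ j ∈ Finset.range (n + 1),
          (PowerSeries.coeff (j + 1) g * ((j : ℚ) + 1)) *
            PowerSeries.coeff (n - j) (g ^ k) := by
      rw [smul_eq_mul, mul_comm, PowerSeries.coeff_mul,
        Finset.Nat.sum_antidiagonal_eq_sum_range_succ_mk]
      simp [PowerSeries.coeff_derivative]
    rw [h2] at h1
    rw [mul_comm ((n : ℚ) + 1), h1, nsmul_eq_mul]
    push_cast
    ring
  have hE : ∀ m : ℕ, PowerSeries.coeff m (formalExp g) =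
      ∑ k ∈ Finset.range (m + 1), PowerSeries.coeff m (g ^ k) / (Nat.factorial k : ℚ) := by
    intro m; simp [formalExp]
  calc ((n : ℚ) + 1) * PowerSeries.coeff (n + 1) (formalExp g)
      = ∑ k ∈ Finset.range (n + 2),
          ((n : ℚ) + 1) * PowerSeries.coeff (n + 1) (g ^ k) / (Nat.factorial k : ℚ) := by
        rw [hE, Finset.mul_sum]; exact Finset.sum_congr rfl fun k _ => by ring
    _ = ∑ k ∈ Finset.range (n + 1),
          ((n : ℚ) + 1) * PowerSeries.coeff (n + 1) (g ^ (k + 1)) /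
            (Nat.factorial (k + 1) : ℚ) := by
        rw [Finset.sum_range_succ']
        simp
    _ = ∑ k ∈ Finset.range (n + 1), ∑ j ∈ Finset.range (n + 1),
          (PowerSeries.coeff (j + 1) g * ((j : ℚ) + 1)) *
            (PowerSeries.coeff (n - j) (g ^ k) / (Nat.factorial k : ℚ)) := by
        refine Finset.sum_congr rfl fun k _ => ?_
        rw [hterm k, Nat.factorial_succ, Finset.mul_sum, Finset.sum_div]
        refine Finset.sum_congr rfl fun j _ => ?_
        have hk : ((k : ℚ) + 1) ≠ 0 := by positivity
        have hf : (Nat.factorial k : ℚ) ≠ 0 := Nat.cast_ne_zero.mpr k.factorial_ne_zero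
        push_cast
        field_simp
    _ = ∑ j ∈ Finset.range (n + 1),
          (PowerSeries.coeff (j + 1) g * ((j : ℚ) + 1)) *
            ∑ k ∈ Finset.range (n + 1),
              PowerSeries.coeff (n - j) (g ^ k) / (Nat.factorial k : ℚ) := by
        rw [Finset.sum_comm]
        exact Finset.sum_congr rfl fun j _ => by rw [Finset.mul_sum]
    _ = ∑ j ∈ Finset.range (n + 1),
          (PowerSeries.coeff (j + 1) g * ((j : ℚ) + 1)) *
            PowerSeries.coeff (n - j) (formalExp g) := by
        refine Finset.sum_congr rfl fun j hj => ?_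
        congr 1
        rw [hE (n - j)]
        refine (Finset.sum_subset ?_ ?_).symm
        · exact Finset.range_subset_range.mpr (by omega)
        · intro k _ hk
          rw [coeff_pow_eq_zero' hg (by simp at hk ⊢; omega), zero_div]

/-- Theorem 3.3, formula (3.12): the recursion expressing the
exponents `Ω(n)` of the product form of the Feynman identity in terms of the
coefficients `c(n)` of `exp(−Σ_{m≥1} (1/m)(Σ_{d∣m} d·Ω(d)) X^m) = 1 − Σ c(n) X^n`. -/
theorem Omega_recursion (Ω c : ℕ → ℚ)
    (hc : ∀ n : ℕ, 1 ≤ n → c n = - PowerSeries.coeff n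
      (formalExp (- PowerSeries.mk fun m =>
        if m = 0 then 0 else (1 / (m : ℚ)) * ∑ d ∈ m.divisors, (d : ℚ) * Ω d))) :
    ∀ n : ℕ, 1 ≤ n →
      (n : ℚ) * Ω n = (n : ℚ) * c n
        + ∑ k ∈ Finset.Icc 1 (n - 1), (∑ g ∈ k.divisors, (g : ℚ) * Ω g) * c (n - k)
        - ∑ g ∈ n.properDivisors, (g : ℚ) * Ω g := by
  set b : ℕ → ℚ := fun m => ∑ d ∈ m.divisors, (d : ℚ) * Ω d with hb
  set g : PowerSeries ℚ :=
    - PowerSeries.mk fun m => if m = 0 then 0 else (1 / (m : ℚ)) * b m with hgdef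
  have hg0 : constantCoeff g = 0 := by
    rw [hgdef, ← PowerSeries.coeff_zero_eq_constantCoeff_apply]
    simp
  have hgc : ∀ j : ℕ, PowerSeries.coeff (j + 1) g * ((j : ℚ) + 1) = - b (j + 1) := by
    intro j
    have hj : ((j : ℚ) + 1) ≠ 0 := by positivity
    rw [hgdef]
    simp only [map_neg, PowerSeries.coeff_mk, Nat.succ_ne_zero, if_false]
    push_cast
    rw [neg_mul, one_div, inv_mul_eq_div, div_mul_eq_mul_div, mul_div_assoc,
      div_self hj, mul_one]
  intro n hn
  obtain ⟨N, rfl⟩ : ∃ N, n = N + 1 := ⟨n - 1, by omega⟩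
  have hkey := key g hg0 N
  have hE : ∀ m : ℕ, 1 ≤ m → PowerSeries.coeff m (formalExp g) = - c m := by
    intro m hm; rw [hc m hm]; ring
  rw [hE (N + 1) (by omega)] at hkey
  have hsplit : ∑ j ∈ Finset.range (N + 1),
      (PowerSeries.coeff (j + 1) g * ((j : ℚ) + 1)) *
        PowerSeries.coeff (N - j) (formalExp g)
      = (∑ j ∈ Finset.range N, b (j + 1) * c (N - j)) - b (N + 1) := by
    rw [Finset.sum_range_succ, Nat.sub_self, coeff_formalExp_zero, hgc N]
    have : ∀ j ∈ Finset.range N,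
        (PowerSeries.coeff (j + 1) g * ((j : ℚ) + 1)) *
          PowerSeries.coeff (N - j) (formalExp g) = b (j + 1) * c (N - j) := by
      intro j hj
      simp only [Finset.mem_range] at hj
      rw [hgc j, hE (N - j) (by omega)]
      ring
    rw [Finset.sum_congr rfl this]
    ring
  rw [hsplit] at hkey
  -- hkey : (N+1) * (-c (N+1)) = (Σ_{j<N} b(j+1) c(N-j)) - b(N+1)
  have hbsum : b (N + 1) = ((N : ℚ) + 1) * Ω (N + 1)
      + ∑ g ∈ (N + 1).properDivisors, (g : ℚ) * Ω g := by
    show ∑ d ∈ (N + 1).divisors, (d : ℚ) * Ω d = _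
    rw [← Nat.insert_self_properDivisors (Nat.succ_ne_zero N),
      Finset.sum_insert Nat.self_notMem_properDivisors]
    push_cast
    ring
  have hIcc : ∑ k ∈ Finset.Icc 1 (N + 1 - 1), (∑ g ∈ k.divisors, (g : ℚ) * Ω g) * c (N + 1 - k)
      = ∑ j ∈ Finset.range N, b (j + 1) * c (N - j) := by
    simp only [Nat.add_sub_cancel]
    rw [← Finset.Ico_add_one_right_eq_Icc, Finset.sum_Ico_eq_sum_range]
    refine Finset.sum_congr (by norm_num) fun j hj => ?_
    have : 1 + j = j + 1 := by omega
    rw [this]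
    congr 2
    omega
  rw [hIcc]
  push_cast at hkey ⊢
  linarith [hkey, hbsum]
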